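/- arXiv:2202.07743 — 2 statements merged into one kernel-verified Lean document; each statement's English description precedes it below -/
import Mathlib

section
/- Let γ ∈ (0,1/2] and L ≥ 0, and let g, h : [0,∞) → ℝ satisfy: h(0) = 0, 0 ≤ h(u) ≤ L·u for all u ∈ [0,γ], the map u ↦ h(u)/u is non-increasing on (0,γ], g(u) ≤ h(u) for all u ∈ (0,γ], and g(u)/u ≤ h(γ)/γ for all u ≥ γ. Then for every sequence (v_n)_{n∈ℕ} of nonnegative real numbers which is summable with 0 < Σ_{n∈ℕ} v_n ≤ 1, the sequence (h(γ·v_n))_{n∈ℕ} is summable and g(Σ_{n∈ℕ} v_n) ≤ γ^{-1}·Σ_{n∈ℕ} h(γ·v_n). -/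
/-- Key pointwise inequality used to show that `γ⁻¹ ∑ uₙ'` is a supersolution
(proof of Theorem 2.1 of "Virtual Linearity and Homogenization for KPP
Reaction-Diffusion Equations"). -/
theorem stmt0
    (γ L : ℝ) (hγ : γ ∈ Set.Ioc (0 : ℝ) (1 / 2)) (hL : 0 ≤ L)
    (g h : ℝ → ℝ)
    (h0 : h 0 = 0)
    (hbound : ∀ u ∈ Set.Icc (0 : ℝ) γ, 0 ≤ h u ∧ h u ≤ L * u)
    (hmono : ∀ u v : ℝ, 0 < u → u ≤ v → v ≤ γ → h v / v ≤ h u / u)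
    (hgh : ∀ u ∈ Set.Ioc (0 : ℝ) γ, g u ≤ h u)
    (hslope : ∀ u : ℝ, γ ≤ u → g u / u ≤ h γ / γ)
    (v : ℕ → ℝ) (hv : ∀ n, 0 ≤ v n) (hsum : Summable v)
    (hpos : 0 < ∑' n, v n) (hle : (∑' n, v n) ≤ 1) :
    Summable (fun n => h (γ * v n)) ∧
      g (∑' n, v n) ≤ γ⁻¹ * ∑' n, h (γ * v n) := by
  obtain ⟨hγ0, hγ2⟩ := hγ
  set S := ∑' n, v n with hS
  have hvS : ∀ n, v n ≤ S := fun n => Summable.le_tsum hsum n (fun m _ => hv m)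
  have hvle1 : ∀ n, v n ≤ 1 := fun n => (hvS n).trans hle
  have hmem : ∀ n, γ * v n ∈ Set.Icc (0 : ℝ) γ := by
    intro n
    exact ⟨mul_nonneg hγ0.le (hv n), by nlinarith [hv n, hvle1 n]⟩
  have hsummable : Summable (fun n => h (γ * v n)) := by
    apply Summable.of_nonneg_of_le (fun n => (hbound _ (hmem n)).1)
      (fun n => (hbound _ (hmem n)).2)
    simpa [mul_assoc] using hsum.mul_left (L * γ)
  have hSγ : γ * S ≤ γ := by nlinarith
  have hγS : 0 < γ * S := by positivity
  have hkey : ∀ n, (h (γ * S) / S) * v n ≤ h (γ * v n) := by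
    intro n
    rcases eq_or_lt_of_le (hv n) with h0' | hpos'
    · simp [← h0', h0]
    · have hmono' := hmono (γ * v n) (γ * S) (by positivity)
        (by nlinarith [hvS n]) hSγ
      rw [div_le_div_iff₀ hγS (by positivity)] at hmono'
      rw [div_mul_eq_mul_div, div_le_iff₀ hpos]
      nlinarith
  have hsum_ge : h (γ * S) ≤ ∑' n, h (γ * v n) := by
    have := Summable.tsum_le_tsum hkey (hsum.mul_left _) hsummable
    rwa [tsum_mul_left, div_mul_cancel₀ _ (ne_of_gt hpos)] at this
  refine ⟨hsummable, ?_⟩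
  have hfin : g S ≤ γ⁻¹ * h (γ * S) := by
    rcases le_total S γ with hSle | hSge
    · have h1 : g S ≤ h S := hgh S ⟨hpos, hSle⟩
      have h2 := hmono (γ * S) S hγS (by nlinarith) hSle
      rw [div_le_div_iff₀ hpos hγS] at h2
      rw [inv_mul_eq_div, le_div_iff₀ hγ0]
      nlinarith [mul_le_mul_of_nonneg_right h1 hγ0.le]
    · have h1 := hslope S hSge
      rw [div_le_div_iff₀ hpos hγ0] at h1
      have h2 := hmono (γ * S) γ hγS hSγ le_rfl
      rw [div_le_div_iff₀ hγ0 hγS] at h2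
      rw [inv_mul_eq_div, le_div_iff₀ hγ0]
      nlinarith
  calc g S ≤ γ⁻¹ * h (γ * S) := hfin
    _ ≤ γ⁻¹ * ∑' n, h (γ * v n) :=
      mul_le_mul_of_nonneg_left hsum_ge (by positivity)
end

section
/- Let γ ∈ (0,1/2], let ψ : (0,1) → [0,∞) be non-decreasing, and let g, h : [0,∞) → ℝ satisfy: the map u ↦ h(u)/u is non-increasing on (0,γ], h(u) ≤ g(u) + ψ(u)·u for all u ∈ (0,γ], and h(u)/u ≤ h(γ)/γ for all u ≥ γ. Then for every r ∈ (0,γ] and every u ∈ (0,1], one has r·h(u) ≤ g(r·u) + ψ(r)·r·u. -/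
/-- Pointwise reaction inequality used to show that `s·e^{-ψ(s)t}·uₙ'` is a
subsolution (proof of Theorem 2.1 of "Virtual Linearity and Homogenization for
KPP Reaction-Diffusion Equations"). -/
theorem stmt1
    (γ : ℝ) (hγ : γ ∈ Set.Ioc (0 : ℝ) (1 / 2))
    (ψ : ℝ → ℝ) (hψ0 : ∀ u ∈ Set.Ioo (0 : ℝ) 1, 0 ≤ ψ u)
    (hψmono : ∀ u v : ℝ, u ∈ Set.Ioo (0 : ℝ) 1 → v ∈ Set.Ioo (0 : ℝ) 1 → u ≤ v → ψ u ≤ ψ v)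
    (g h : ℝ → ℝ)
    (hmono : ∀ u v : ℝ, 0 < u → u ≤ v → v ≤ γ → h v / v ≤ h u / u)
    (hhg : ∀ u ∈ Set.Ioc (0 : ℝ) γ, h u ≤ g u + ψ u * u)
    (hslope : ∀ u : ℝ, γ ≤ u → h u / u ≤ h γ / γ)
    (r : ℝ) (hr : r ∈ Set.Ioc (0 : ℝ) γ) (u : ℝ) (hu : u ∈ Set.Ioc (0 : ℝ) 1) :
    r * h u ≤ g (r * u) + ψ r * r * u := by
  obtain ⟨hγ0, hγhalf⟩ := hγ
  obtain ⟨hr0, hrγ⟩ := hr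
  obtain ⟨hu0, hu1⟩ := hu
  have hru0 : 0 < r * u := mul_pos hr0 hu0
  have hruγ : r * u ≤ γ := le_trans (by nlinarith) hrγ
  have hr1 : r < 1 := lt_of_le_of_lt hrγ (by linarith)
  have hru1 : r * u < 1 := lt_of_le_of_lt hruγ (by linarith)
  -- key: h u / u ≤ h (r*u) / (r*u)
  have key : h u / u ≤ h (r * u) / (r * u) := by
    rcases le_or_gt u γ with hcase | hcase
    · exact hmono (r * u) u hru0 (by nlinarith) hcase
    · exact le_trans (hslope u hcase.le) (hmono (r * u) γ hru0 hruγ le_rfl)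
  have h1 : r * h u ≤ h (r * u) := by
    have := mul_le_mul_of_nonneg_left key hru0.le
    rw [div_eq_mul_inv, div_eq_mul_inv] at this
    calc r * h u = (r * u) * (h u * u⁻¹) := by field_simp
    _ ≤ (r * u) * (h (r * u) * (r * u)⁻¹) := this
    _ = h (r * u) := by field_simp
  have h2 : h (r * u) ≤ g (r * u) + ψ (r * u) * (r * u) :=
    hhg (r * u) ⟨hru0, hruγ⟩
  have h3 : ψ (r * u) ≤ ψ r :=
    hψmono (r * u) r ⟨hru0, hru1⟩ ⟨hr0, hr1⟩ (by nlinarith)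
  nlinarith [hψ0 (r * u) ⟨hru0, hru1⟩]
end
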